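/- arXiv:2309.05171 — 2 statements merged into one kernel-verified Lean document; each statement's English description precedes it below -/
import Mathlib

section
/- Let G be a connected graph on n vertices with maximum degree n − 1. Then Kemeny's constant of G is strictly less than 2(n − 1). -/
open Finset Classical

/-- The number of spanning trees of a finite simple graph `G`. -/
noncomputable def numSpanningTrees {V : Type*} [Fintype V] (G : SimpleGraph V) : ℕ :=
  Nat.card {T : SimpleGraph V // T ≤ G ∧ T.IsTree}

/-- The number of spanning 2-forests of `G` with `i` and `j` in different components. -/
noncomputable def numSepForests {V : Type*} [Fintype V] (G : SimpleGraph V) (i j : V) : ℕ :=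
  Nat.card {F : SimpleGraph V // F ≤ G ∧ F.IsAcyclic ∧
    Nat.card F.ConnectedComponent = 2 ∧ ¬ F.Reachable i j}

/-- The effective resistance between `i` and `j`: the number of spanning 2-forests separating
`i` and `j` divided by the number of spanning trees. -/
noncomputable def effRes {V : Type*} [Fintype V] (G : SimpleGraph V) (i j : V) : ℝ :=
  (numSepForests G i j : ℝ) / (numSpanningTrees G : ℝ)

/-- Kemeny's constant of a connected graph `G`:
`K(G) = (1/(4m)) ∑_{i,j} d_i r_{i,j} d_j`. -/
noncomputable def kemeny {V : Type*} [Fintype V] (G : SimpleGraph V) : ℝ :=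
  (1 / (4 * (G.edgeFinset.card : ℝ))) *
    ∑ i : V, ∑ j : V, (G.degree i : ℝ) * effRes G i j * (G.degree j : ℝ)


section Aux

open SimpleGraph

variable {V : Type*}

variable {V : Type*}

lemma isolated_not_reachable {F : SimpleGraph V} {u j : V} (h : ∀ x, ¬ F.Adj u x)
    (hne : u ≠ j) : ¬ F.Reachable u j := by
  rintro ⟨p⟩
  cases p with
  | nil => exact hne rfl
  | cons h' _ => exact h _ h'

/-- The star graph centered at `v`. -/
def starG (v : V) : SimpleGraph V where
  Adj a b := a ≠ b ∧ (a = v ∨ b = v)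
  symm := ⟨by rintro a b ⟨h1, h2⟩; exact ⟨h1.symm, h2.symm⟩⟩
  loopless := ⟨by rintro a ⟨h1, _⟩; exact h1 rfl⟩

lemma starG_le {G : SimpleGraph V} {v : V} (hv : ∀ w, w ≠ v → G.Adj v w) :
    starG v ≤ G := by
  rintro a b ⟨h1, h2 | h2⟩
  · exact h2 ▸ hv b (fun h => h1 (h2.trans h.symm))
  · subst h2; exact (hv a (fun h => h1 h)).symm

lemma starG_isTree [Nonempty V] (v : V) : (starG v).IsTree := by
  constructor
  · rw [connected_iff_exists_forall_reachable]
    refine ⟨v, fun w => ?_⟩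
    by_cases h : w = v
    · subst h; exact Reachable.refl w
    · exact (Adj.reachable ⟨fun hh => h hh.symm, Or.inl rfl⟩)
  · rw [isAcyclic_iff_forall_adj_isBridge]
    intro a b hab
    have key : ∀ x y : V, (starG v).Adj x y → x ≠ v →
        ¬ (starG v \ fromEdgeSet {s(x, y)}).Reachable x y := by
      intro x y hxy hxv
      have hiso : ∀ z, ¬ (starG v \ fromEdgeSet {s(x, y)}).Adj x z := by
        intro z hz
        rw [sdiff_adj, fromEdgeSet_adj] at hz
        obtain ⟨⟨hne, hc | hc⟩, hn⟩ := hz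
        · exact hxv hc
        · subst hc
          have : y = z := by
            rcases hxy.2 with h | h
            · exact absurd h hxv
            · exact h
          exact hn ⟨this ▸ rfl, hne⟩
      exact isolated_not_reachable hiso hxy.ne
    by_cases hav : a = v
    · have hbv : b ≠ v := fun h => hab.1 (hav.trans h.symm)
      rw [Sym2.eq_swap]
      exact key b a hab.symm hbv
    · exact key a b hab hav

lemma comp_cases {F : SimpleGraph V} {a b : V} (h2 : Nat.card F.ConnectedComponent = 2)
    (hab : ¬ F.Reachable a b) (x : V) : F.Reachable x a ∨ F.Reachable x b := by
  obtain ⟨p, q, hpq, huniv⟩ := Nat.card_eq_two_iff.mp h2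
  have hmem : ∀ c : F.ConnectedComponent, c = p ∨ c = q := by
    intro c
    have : c ∈ ({p, q} : Set F.ConnectedComponent) := huniv ▸ Set.mem_univ c
    simpa using this
  have hne : F.connectedComponentMk a ≠ F.connectedComponentMk b := by
    exact fun h => hab (ConnectedComponent.eq.mp h)
  have key : ∀ c : F.ConnectedComponent,
      c = F.connectedComponentMk a ∨ c = F.connectedComponentMk b := by
    intro c
    rcases hmem (F.connectedComponentMk a) with ha | ha <;>
      rcases hmem (F.connectedComponentMk b) with hb | hb <;>
      rcases hmem c with hc | hc <;>
      first
        | (exact absurd (ha.trans hb.symm) hne)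
        | (exact Or.inl (hc.trans ha.symm))
        | (exact Or.inr (hc.trans hb.symm))
  rcases key (F.connectedComponentMk x) with h | h
  · exact Or.inl (ConnectedComponent.eq.mp h)
  · exact Or.inr (ConnectedComponent.eq.mp h)

lemma sup_edge_sdiff {F : SimpleGraph V} {a b : V} (h : ¬ F.Adj a b) :
    (F ⊔ edge a b) \ fromEdgeSet {s(a, b)} = F := by
  ext x y
  simp only [sdiff_adj, sup_adj, edge_adj, fromEdgeSet_adj, Set.mem_singleton_iff]
  constructor
  · rintro ⟨hF | ⟨he, hne⟩, hn⟩
    · exact hF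
    · exact absurd ⟨by rcases he with ⟨rfl, rfl⟩ | ⟨rfl, rfl⟩ <;> simp [Sym2.eq_swap], hne⟩ hn
  · intro hF
    refine ⟨Or.inl hF, fun hn => ?_⟩
    have := hn.1
    rw [Sym2.eq_iff] at this
    rcases this with ⟨rfl, rfl⟩ | ⟨rfl, rfl⟩
    · exact h hF
    · exact h hF.symm

lemma isTree_sup_edge [Fintype V] {F : SimpleGraph V} {a b : V}
    (hac : F.IsAcyclic) (h2 : Nat.card F.ConnectedComponent = 2)
    (hab : ¬ F.Reachable a b) : (F ⊔ edge a b).IsTree := by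
  have hne : a ≠ b := fun h => hab (h ▸ Reachable.refl a)
  have hadj : (F ⊔ edge a b).Adj a b := by
    rw [sup_adj, edge_adj]; exact Or.inr ⟨Or.inl ⟨rfl, rfl⟩, hne⟩
  constructor
  · rw [connected_iff_exists_forall_reachable]
    refine ⟨a, fun w => ?_⟩
    have hr : (F ⊔ edge a b).Reachable a b := hadj.reachable
    rcases comp_cases h2 hab w with h | h
    · exact (h.mono le_sup_left).symm
    · exact hr.trans (h.mono le_sup_left).symm
  · intro u c hc
    by_cases he : s(a, b) ∈ c.edges
    · have := (adj_and_reachable_delete_edges_iff_exists_cycle.mpr ⟨u, c, hc, he⟩).2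
      rw [show (F ⊔ edge a b).deleteEdges {s(a, b)} = F from
        sup_edge_sdiff (fun h => hab h.reachable)] at this
      exact hab this
    · have hsub : ∀ e ∈ c.edges, e ∈ F.edgeSet := by
        intro e hee
        have h1 := c.edges_subset_edgeSet hee
        rw [edgeSet_sup] at h1
        rcases h1 with h1 | h1
        · exact h1
        · rw [edge_edgeSet_of_ne hne] at h1
          exact absurd (h1 ▸ hee) he
      exact hac (c.transfer F hsub) (hc.transfer hsub)

lemma eq_head_of_mem_edges {G : SimpleGraph V} {v w x : V} {q : G.Walk x w} {h : G.Adj v x}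
    (hp : (SimpleGraph.Walk.cons h q).IsPath) {e : Sym2 V}
    (he : e ∈ (SimpleGraph.Walk.cons h q).edges) (hv : v ∈ e) : e = s(v, x) := by
  rw [Walk.edges_cons] at he
  rcases List.mem_cons.mp he with he | he
  · exact he
  · obtain ⟨z, rfl⟩ := Sym2.mem_iff_exists.mp hv
    exact absurd (q.fst_mem_support_of_mem_edges he) ((Walk.cons_isPath_iff h q).mp hp).2

lemma start_edges_eq {G : SimpleGraph V} {v w : V} {p : G.Walk v w} (hp : p.IsPath)
    {e₁ e₂ : Sym2 V} (h1 : e₁ ∈ p.edges) (h2 : e₂ ∈ p.edges)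
    (hv1 : v ∈ e₁) (hv2 : v ∈ e₂) : e₁ = e₂ := by
  cases p with
  | nil => simp at h1
  | cons h q => rw [eq_head_of_mem_edges hp h1 hv1, eq_head_of_mem_edges hp h2 hv2]

lemma end_edges_eq {G : SimpleGraph V} {v w : V} {p : G.Walk v w} (hp : p.IsPath)
    {e₁ e₂ : Sym2 V} (h1 : e₁ ∈ p.edges) (h2 : e₂ ∈ p.edges)
    (hw1 : w ∈ e₁) (hw2 : w ∈ e₂) : e₁ = e₂ :=
  start_edges_eq hp.reverse (by rwa [Walk.edges_reverse, List.mem_reverse])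
    (by rwa [Walk.edges_reverse, List.mem_reverse]) hw1 hw2

lemma mem_edges_of_not_reachable_delete {G : SimpleGraph V} {v w : V} {e : Sym2 V}
    (h : ¬ (G \ fromEdgeSet {e}).Reachable v w) (p : G.Walk v w) : e ∈ p.edges := by
  by_contra he
  apply h
  refine ⟨p.transfer _ fun e' he' => ?_⟩
  simp only [edgeSet_sdiff, edgeSet_fromEdgeSet, edgeSet_sdiff_sdiff_isDiag, Set.mem_diff,
    Set.mem_singleton_iff]
  exact ⟨p.edges_subset_edgeSet he', fun h' => he (h' ▸ he')⟩

/-- The subtype of spanning 2-forests separating `i` and `j`. -/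
abbrev SepType [Fintype V] (G : SimpleGraph V) (i j : V) :=
  {F : SimpleGraph V // F ≤ G ∧ F.IsAcyclic ∧
    Nat.card F.ConnectedComponent = 2 ∧ ¬ F.Reachable i j}

/-- The subtype of spanning trees. -/
abbrev TreeType [Fintype V] (G : SimpleGraph V) :=
  {T : SimpleGraph V // T ≤ G ∧ T.IsTree}

lemma cross_mem [Fintype V] {G F : SimpleGraph V} {a b : V}
    (hFG : F ≤ G) (hac : F.IsAcyclic) (h2 : Nat.card F.ConnectedComponent = 2)
    (hr : ¬ F.Reachable a b) (hGab : G.Adj a b) :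
    (F ⊔ edge a b) ≤ G ∧ (F ⊔ edge a b).IsTree := by
  have : Nonempty V := ⟨a⟩
  refine ⟨sup_le hFG ?_, isTree_sup_edge hac h2 hr⟩
  intro x y hxy
  rw [edge_adj] at hxy
  rcases hxy.1 with ⟨rfl, rfl⟩ | ⟨rfl, rfl⟩
  · exact hGab
  · exact hGab.symm

noncomputable def psi [Fintype V] (G : SimpleGraph V) (v j : V)
    (hv : ∀ w, w ≠ v → G.Adj v w) (hj : j ≠ v)
    (Fu : SepType G v j × ↥(G.neighborSet j)) : TreeType G × Bool :=
  if hu : (Fu.2 : V) = v then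
    (⟨Fu.1.1 ⊔ edge v j, cross_mem Fu.1.2.1 Fu.1.2.2.1 Fu.1.2.2.2.1 Fu.1.2.2.2.2
      (hv j hj)⟩, true)
  else if hr : Fu.1.1.Reachable (Fu.2 : V) j then
    (⟨Fu.1.1 ⊔ edge (Fu.2 : V) v, cross_mem Fu.1.2.1 Fu.1.2.2.1 Fu.1.2.2.2.1
      (fun h => Fu.1.2.2.2.2 (h.symm.trans hr)) (hv (Fu.2 : V) hu).symm⟩, false)
  else
    (⟨Fu.1.1 ⊔ edge (Fu.2 : V) j, cross_mem Fu.1.2.1 Fu.1.2.2.1 Fu.1.2.2.2.1 hr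
      Fu.2.2.symm⟩, true)

lemma edge_mem_path {T F : SimpleGraph V} {a b x y : V} (hTF : T = F ⊔ edge a b)
    (hr : ¬ F.Reachable a b) (hsep : ¬ F.Reachable x y) (p : T.Walk x y) :
    s(a, b) ∈ p.edges := by
  subst hTF
  exact mem_edges_of_not_reachable_delete
    (by rw [sup_edge_sdiff (fun h => hr h.reachable)]; exact hsep) p

lemma forest_recover {T F : SimpleGraph V} {a b : V} (hTF : T = F ⊔ edge a b)
    (hr : ¬ F.Reachable a b) : F = T \ fromEdgeSet {s(a, b)} := by
  subst hTF; exact (sup_edge_sdiff (fun h => hr h.reachable)).symm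

lemma added_edge_eq {T F₁ F₂ : SimpleGraph V} {v j a₁ b₁ a₂ b₂ : V}
    (hT : T.IsTree)
    (h1 : T = F₁ ⊔ edge a₁ b₁) (hr1 : ¬ F₁.Reachable a₁ b₁) (hs1 : ¬ F₁.Reachable v j)
    (h2 : T = F₂ ⊔ edge a₂ b₂) (hr2 : ¬ F₂.Reachable a₂ b₂) (hs2 : ¬ F₂.Reachable v j)
    {x : V} (hx1 : x ∈ s(a₁, b₁)) (hx2 : x ∈ s(a₂, b₂)) (hxe : x = v ∨ x = j) :
    s(a₁, b₁) = s(a₂, b₂) ∧ F₁ = F₂ := by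
  obtain ⟨q⟩ := hT.isConnected v j
  have hp := q.toPath.2
  set p := (q.toPath : T.Walk v j)
  have he₁ := edge_mem_path h1 hr1 hs1 p
  have he₂ := edge_mem_path h2 hr2 hs2 p
  have heq : s(a₁, b₁) = s(a₂, b₂) := by
    rcases hxe with rfl | rfl
    · exact start_edges_eq hp he₁ he₂ hx1 hx2
    · exact end_edges_eq hp he₁ he₂ hx1 hx2
  refine ⟨heq, ?_⟩
  rw [forest_recover h1 hr1, forest_recover h2 hr2, heq]

lemma psi_injective [Fintype V] {G : SimpleGraph V} {v j : V}
    (hv : ∀ w, w ≠ v → G.Adj v w) (hj : j ≠ v) :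
    Function.Injective (psi G v j hv hj) := by
  rintro ⟨F₁, u₁⟩ ⟨F₂, u₂⟩ h
  obtain ⟨hF₁G, hac₁, h2₁, hs₁⟩ := F₁.2
  obtain ⟨hF₂G, hac₂, h2₂, hs₂⟩ := F₂.2
  unfold psi at h
  by_cases hu1 : (u₁ : V) = v <;> by_cases hu2 : (u₂ : V) = v
  · rw [dif_pos hu1, dif_pos hu2, Prod.mk.injEq, Subtype.mk.injEq] at h
    have hT : (F₁.1 ⊔ edge v j).IsTree := (cross_mem hF₁G hac₁ h2₁ hs₁ (hv j hj)).2
    obtain ⟨-, hF⟩ := added_edge_eq hT rfl hs₁ hs₁ h.1 hs₂ hs₂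
      (Sym2.mem_mk_right v j) (Sym2.mem_mk_right v j) (Or.inr rfl)
    exact Prod.ext (Subtype.ext hF) (Subtype.ext (hu1.trans hu2.symm))
  · rw [dif_pos hu1, dif_neg hu2] at h
    by_cases hr2 : F₂.1.Reachable (u₂ : V) j
    · rw [dif_pos hr2] at h
      have hb := congrArg Prod.snd h; simp at hb
    · rw [dif_neg hr2, Prod.mk.injEq, Subtype.mk.injEq] at h
      have hT : (F₁.1 ⊔ edge v j).IsTree := (cross_mem hF₁G hac₁ h2₁ hs₁ (hv j hj)).2
      obtain ⟨he, -⟩ := added_edge_eq hT rfl hs₁ hs₁ h.1 hr2 hs₂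
        (Sym2.mem_mk_right v j) (Sym2.mem_mk_right (u₂ : V) j) (Or.inr rfl)
      rw [Sym2.eq_iff] at he
      rcases he with ⟨hvu, -⟩ | ⟨hvj', -⟩
      · exact absurd hvu.symm hu2
      · exact absurd hvj'.symm hj
  · rw [dif_pos hu2, dif_neg hu1] at h
    by_cases hr1 : F₁.1.Reachable (u₁ : V) j
    · rw [dif_pos hr1] at h
      have hb := congrArg Prod.snd h; simp at hb
    · rw [dif_neg hr1, Prod.mk.injEq, Subtype.mk.injEq] at h
      have hT : (F₁.1 ⊔ edge (u₁ : V) j).IsTree :=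
        (cross_mem hF₁G hac₁ h2₁ hr1 (u₁.2.symm)).2
      obtain ⟨he, -⟩ := added_edge_eq hT rfl hr1 hs₁ h.1 hs₂ hs₂
        (Sym2.mem_mk_right (u₁ : V) j) (Sym2.mem_mk_right v j) (Or.inr rfl)
      rw [Sym2.eq_iff] at he
      rcases he with ⟨hvu, -⟩ | ⟨-, hvj'⟩
      · exact absurd hvu hu1
      · exact absurd hvj' hj
  · by_cases hr1 : F₁.1.Reachable (u₁ : V) j <;> by_cases hr2 : F₂.1.Reachable (u₂ : V) j
    · rw [dif_neg hu1, dif_neg hu2, dif_pos hr1, dif_pos hr2, Prod.mk.injEq,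
        Subtype.mk.injEq] at h
      have hcr1 : ¬ F₁.1.Reachable (u₁ : V) v := fun hh => hs₁ (hh.symm.trans hr1)
      have hcr2 : ¬ F₂.1.Reachable (u₂ : V) v := fun hh => hs₂ (hh.symm.trans hr2)
      have hT : (F₁.1 ⊔ edge (u₁ : V) v).IsTree :=
        (cross_mem hF₁G hac₁ h2₁ hcr1 (hv (u₁ : V) hu1).symm).2
      obtain ⟨he, hF⟩ := added_edge_eq hT rfl hcr1 hs₁ h.1 hcr2 hs₂
        (Sym2.mem_mk_right (u₁ : V) v) (Sym2.mem_mk_right (u₂ : V) v) (Or.inl rfl)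
      rw [Sym2.eq_iff] at he
      rcases he with ⟨huu, -⟩ | ⟨huv, -⟩
      · exact Prod.ext (Subtype.ext hF) (Subtype.ext huu)
      · exact absurd huv hu1
    · rw [dif_neg hu1, dif_neg hu2, dif_pos hr1, dif_neg hr2] at h
      have hb := congrArg Prod.snd h; simp at hb
    · rw [dif_neg hu1, dif_neg hu2, dif_neg hr1, dif_pos hr2] at h
      have hb := congrArg Prod.snd h; simp at hb
    · rw [dif_neg hu1, dif_neg hu2, dif_neg hr1, dif_neg hr2, Prod.mk.injEq,
        Subtype.mk.injEq] at h
      have hT : (F₁.1 ⊔ edge (u₁ : V) j).IsTree :=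
        (cross_mem hF₁G hac₁ h2₁ hr1 (u₁.2.symm)).2
      obtain ⟨he, hF⟩ := added_edge_eq hT rfl hr1 hs₁ h.1 hr2 hs₂
        (Sym2.mem_mk_right (u₁ : V) j) (Sym2.mem_mk_right (u₂ : V) j) (Or.inr rfl)
      rw [Sym2.eq_iff] at he
      rcases he with ⟨huu, -⟩ | ⟨-, hju⟩
      · exact Prod.ext (Subtype.ext hF) (Subtype.ext huu)
      · exact absurd hju.symm u₂.2.ne'

lemma psi_ne_star [Fintype V] {G : SimpleGraph V} {v j : V}
    (hv : ∀ w, w ≠ v → G.Adj v w) (hj : j ≠ v)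
    (Fu : SepType G v j × ↥(G.neighborSet j)) :
    psi G v j hv hj Fu ≠ (⟨starG v, starG_le hv, @starG_isTree V ⟨v⟩ v⟩, false) := by
  obtain ⟨F, u⟩ := Fu
  intro h
  unfold psi at h
  by_cases hu : (u : V) = v
  · rw [dif_pos hu] at h; have hb := congrArg Prod.snd h; simp at hb
  · by_cases hr : F.1.Reachable (u : V) j
    · rw [dif_neg hu, dif_pos hr, Prod.mk.injEq, Subtype.mk.injEq] at h
      have hcr : ¬ F.1.Reachable (u : V) v := fun hh => F.2.2.2.2 (hh.symm.trans hr)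
      have hFrec : F.1 = starG v \ fromEdgeSet {s((u : V), v)} := by
        rw [← h.1]; exact forest_recover rfl hcr
      have hiso : ∀ z, ¬ F.1.Adj (u : V) z := by
        intro z hz
        rw [hFrec, sdiff_adj, fromEdgeSet_adj] at hz
        obtain ⟨⟨hne, hc | hc⟩, hn⟩ := hz
        · exact hu hc
        · exact hn ⟨by rw [hc]; exact rfl, hne⟩
      exact (isolated_not_reachable hiso u.2.ne') hr
    · rw [dif_neg hu, dif_neg hr] at h; have hb := congrArg Prod.snd h; simp at hb

lemma key_count [Fintype V] {G : SimpleGraph V} {v j : V}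
    (hv : ∀ w, w ≠ v → G.Adj v w) (hj : j ≠ v) :
    G.degree j * numSepForests G v j + 1 ≤ 2 * numSpanningTrees G := by
  classical
  have hNE : Nonempty V := ⟨v⟩
  let pt : TreeType G × Bool := (⟨starG v, starG_le hv, @starG_isTree V ⟨v⟩ v⟩, false)
  let Θ : (SepType G v j × ↥(G.neighborSet j)) ⊕ PUnit.{1} → TreeType G × Bool :=
    Sum.elim (psi G v j hv hj) (fun _ => pt)
  have hΘ : Function.Injective Θ := by
    rintro (x | x) (y | y) h
    · exact congrArg Sum.inl (psi_injective hv hj h)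
    · exact absurd h (psi_ne_star hv hj x)
    · exact absurd h.symm (psi_ne_star hv hj y)
    · cases x; cases y; rfl
  have hcard := Nat.card_le_card_of_injective Θ hΘ
  rw [Nat.card_sum, Nat.card_prod, Nat.card_prod] at hcard
  have hdeg : Nat.card ↥(G.neighborSet j) = G.degree j := by
    rw [Nat.card_eq_fintype_card]
    convert G.card_neighborSet_eq_degree j using 2
  have hpunit : Nat.card PUnit.{1} = 1 := Nat.card_unique
  have hbool : Nat.card Bool = 2 := by simp [Nat.card_eq_fintype_card]
  rw [hdeg, hpunit, hbool] at hcard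
  have h1 : numSepForests G v j = Nat.card (SepType G v j) := rfl
  have h2 : numSpanningTrees G = Nat.card (TreeType G) := rfl
  rw [h1, h2, mul_comm]
  calc Nat.card (SepType G v j) * G.degree j + 1 ≤ Nat.card (TreeType G) * 2 := hcard
    _ = 2 * Nat.card (TreeType G) := mul_comm _ _

lemma numSepForests_comm [Fintype V] (G : SimpleGraph V) (i j : V) :
    numSepForests G i j = numSepForests G j i := by
  apply Nat.card_congr
  exact Equiv.subtypeEquivRight (fun F => by
    constructor <;> rintro ⟨h1, h2, h3, h4⟩ <;>
      exact ⟨h1, h2, h3, fun hr => h4 hr.symm⟩)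

lemma numSepForests_self [Fintype V] (G : SimpleGraph V) (i : V) :
    numSepForests G i i = 0 := by
  have : IsEmpty {F : SimpleGraph V // F ≤ G ∧ F.IsAcyclic ∧
      Nat.card F.ConnectedComponent = 2 ∧ ¬ F.Reachable i i} :=
    ⟨fun F => F.2.2.2.2 (Reachable.refl i)⟩
  exact Nat.card_of_isEmpty

lemma numSepForests_triangle [Fintype V] (G : SimpleGraph V) (i j v : V) :
    numSepForests G i j ≤ numSepForests G i v + numSepForests G v j := by
  classical
  unfold numSepForests
  rw [← Nat.card_sum]
  apply Nat.card_le_card_of_injective (fun F =>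
    if h : F.1.Reachable i v
    then Sum.inr (⟨F.1, F.2.1, F.2.2.1, F.2.2.2.1, fun hr => F.2.2.2.2 (h.trans hr)⟩ :
      {F : SimpleGraph V // F ≤ G ∧ F.IsAcyclic ∧
        Nat.card F.ConnectedComponent = 2 ∧ ¬ F.Reachable v j})
    else Sum.inl ⟨F.1, F.2.1, F.2.2.1, F.2.2.2.1, h⟩)
  intro x y hxy
  dsimp only at hxy
  by_cases hx : x.1.Reachable i v <;> by_cases hy : y.1.Reachable i v
  · rw [dif_pos hx, dif_pos hy] at hxy
    have h2 := congrArg (fun z => (Subtype.val z : SimpleGraph V)) (Sum.inr.inj hxy)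
    exact Subtype.ext h2
  · rw [dif_pos hx, dif_neg hy] at hxy; simp at hxy
  · rw [dif_neg hx, dif_pos hy] at hxy; simp at hxy
  · rw [dif_neg hx, dif_neg hy] at hxy
    have h2 := congrArg (fun z => (Subtype.val z : SimpleGraph V)) (Sum.inl.inj hxy)
    exact Subtype.ext h2

lemma one_le_numSpanningTrees [Fintype V] {G : SimpleGraph V} {v : V}
    (hv : ∀ w, w ≠ v → G.Adj v w) : 1 ≤ numSpanningTrees G := by
  have hne : Nonempty (TreeType G) := ⟨⟨starG v, starG_le hv, @starG_isTree V ⟨v⟩ v⟩⟩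
  exact Nat.card_pos


end Aux

/-- If a connected graph `G` on `n` vertices has maximum degree `n - 1`, then
`K(G) < 2(n - 1)`. -/
theorem kemeny_lt_of_maxDegree_eq {V : Type*} [Fintype V] [Nonempty V] (G : SimpleGraph V)
    (hG : G.Connected) (hn : 2 ≤ Fintype.card V)
    (hΔ : G.maxDegree = Fintype.card V - 1) :
    kemeny G < 2 * ((Fintype.card V : ℝ) - 1) := by

  classical
  obtain ⟨v, hvdeg⟩ := G.exists_maximal_degree_vertex
  have hdegv : G.degree v = Fintype.card V - 1 := by rw [← hvdeg, hΔ]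
  have hv : ∀ w, w ≠ v → G.Adj v w := by
    intro w hw
    have hsub : G.neighborFinset v ⊆ Finset.univ.erase v := fun x hx =>
      Finset.mem_erase.mpr ⟨((G.mem_neighborFinset v x).mp hx).ne', Finset.mem_univ x⟩
    have hcard : (Finset.univ.erase v).card ≤ (G.neighborFinset v).card := by
      rw [Finset.card_erase_of_mem (Finset.mem_univ v), Finset.card_univ,
        G.card_neighborFinset_eq_degree, hdegv]
    have heq := Finset.eq_of_subset_of_card_le hsub hcard
    have : w ∈ G.neighborFinset v := by
      rw [heq]; exact Finset.mem_erase.mpr ⟨hw, Finset.mem_univ w⟩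
    exact (G.mem_neighborFinset v w).mp this
  set n := Fintype.card V with hndef
  have hτ1 : 1 ≤ numSpanningTrees G := one_le_numSpanningTrees hv
  set τ : ℝ := (numSpanningTrees G : ℝ) with hτdef
  have hτ0 : (1 : ℝ) ≤ τ := by simp only [hτdef]; exact_mod_cast hτ1
  have hτpos : (0 : ℝ) < τ := lt_of_lt_of_le one_pos hτ0
  have hmpos : 0 < (G.edgeFinset.card : ℝ) := by
    obtain ⟨w, hw⟩ := Fintype.exists_ne_of_one_lt_card (by omega) v
    have hmem : s(v, w) ∈ G.edgeFinset := by
      rw [SimpleGraph.mem_edgeFinset]; exact (hv w hw)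
    exact_mod_cast Finset.card_pos.mpr ⟨_, hmem⟩
  set m : ℝ := (G.edgeFinset.card : ℝ) with hmdef
  set d : V → ℝ := fun i => (G.degree i : ℝ) with hd
  set f : V → V → ℝ := fun i j => (numSepForests G i j : ℝ) with hf
  have hdnn : ∀ i, 0 ≤ d i := fun i => Nat.cast_nonneg _
  have hfvv : f v v = 0 := by simp [hf, numSepForests_self]
  have hkey : ∀ jj, jj ≠ v → d jj * f v jj ≤ 2 * τ - 1 := by
    intro jj hjj
    have h1 := key_count hv hjj
    have h2 := (Nat.cast_le (α := ℝ)).mpr h1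
    push_cast at h2
    simp only [hd, hf, hτdef]
    linarith
  have htri : ∀ i j, f i j ≤ f i v + f v j := by
    intro i j
    have := numSepForests_triangle G i j v
    simp only [hf]
    exact_mod_cast this
  have hS : ∑ i, ∑ j, d i * effRes G i j * d j ≤
      (∑ i, ∑ j, (d i * d j * (f i v + f v j))) / τ := by
    rw [Finset.sum_div]
    apply Finset.sum_le_sum; intro i _
    rw [Finset.sum_div]
    apply Finset.sum_le_sum; intro j _
    have heff : effRes G i j = f i j / τ := rfl
    rw [heff]
    calc d i * (f i j / τ) * d j = d i * d j * f i j / τ := by ring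
      _ ≤ d i * d j * (f i v + f v j) / τ := by
          gcongr
          exact htri i j
  have hsplit : ∑ i, ∑ j, (d i * d j * (f i v + f v j)) =
      (∑ i, d i * f i v) * (∑ j, d j) + (∑ i, d i) * (∑ j, d j * f v j) := by
    have hrow : ∀ i, ∑ j, d i * d j * (f i v + f v j) =
        (d i * f i v) * (∑ j, d j) + d i * (∑ j, d j * f v j) := by
      intro i
      rw [Finset.mul_sum, Finset.mul_sum, ← Finset.sum_add_distrib]
      apply Finset.sum_congr rfl; intro j _; ring
    rw [Finset.sum_congr rfl (fun i _ => hrow i), Finset.sum_add_distrib,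
      ← Finset.sum_mul, ← Finset.sum_mul]
  have hAB : ∑ i, d i * f i v = ∑ j, d j * f v j := by
    apply Finset.sum_congr rfl; intro i _
    simp only [hf]
    rw [numSepForests_comm]
  have hD : ∑ i, d i = 2 * m := by
    simp only [hd, hmdef]
    rw [← Nat.cast_sum]
    exact_mod_cast congrArg (Nat.cast : ℕ → ℝ) (G.sum_degrees_eq_twice_card_edges)
  set B : ℝ := ∑ j, d j * f v j with hBdef
  have hB : B ≤ ((n : ℝ) - 1) * (2 * τ - 1) := by
    have hzero : d v * f v v = 0 := by rw [hfvv, mul_zero]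
    have herase : ∑ j ∈ Finset.univ.erase v, d j * f v j = B := Finset.sum_erase _ hzero
    rw [← herase]
    have hle : ∀ x ∈ Finset.univ.erase v, d x * f v x ≤ 2 * τ - 1 := fun x hx =>
      hkey x (Finset.mem_erase.mp hx).1
    calc ∑ j ∈ Finset.univ.erase v, d j * f v j
        ≤ (Finset.univ.erase v).card • (2 * τ - 1) := Finset.sum_le_card_nsmul _ _ _ hle
      _ = ((Finset.univ.erase v).card : ℝ) * (2 * τ - 1) := nsmul_eq_mul _ _
      _ = ((n : ℝ) - 1) * (2 * τ - 1) := by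
          rw [Finset.card_erase_of_mem (Finset.mem_univ v), Finset.card_univ, ← hndef]
          congr 1
          rw [Nat.cast_sub (by omega)]
          norm_num
  have hKB : kemeny G ≤ B / τ := by
    unfold kemeny
    have hstep := mul_le_mul_of_nonneg_left hS
      (show (0:ℝ) ≤ 1 / (4 * m) by positivity)
    refine le_trans hstep ?_
    rw [hsplit, hAB, hD]
    have hm0 : m ≠ 0 := ne_of_gt hmpos
    have ht0 : τ ≠ 0 := ne_of_gt hτpos
    have heq : 1 / (4 * m) * ((B * (2 * m) + 2 * m * B) / τ) = B / τ := by
      field_simp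
      ring
    rw [heq]
  have hfinal : B / τ < 2 * ((n : ℝ) - 1) := by
    have hn1 : (1 : ℝ) ≤ (n : ℝ) - 1 := by
      have : (2 : ℝ) ≤ (n : ℝ) := by exact_mod_cast hn
      linarith
    have h1 : B / τ ≤ ((n : ℝ) - 1) * (2 * τ - 1) / τ := by gcongr
    have h2 : ((n : ℝ) - 1) * (2 * τ - 1) / τ < 2 * ((n : ℝ) - 1) := by
      rw [div_lt_iff₀ hτpos]
      nlinarith
    exact lt_of_le_of_lt h1 h2
  exact lt_of_le_of_lt hKB hfinal
end

section
/- Let T be a tree on n ≥ 2 vertices. Then Kemeny's constant of T equals 2W(T)/(n−1) − n + 1/2, where W(T) is the Wiener index of T. -/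
open Finset Classical

/-- The Wiener index of `G`: the sum of distances over all unordered pairs of distinct
vertices (computed as half the sum over ordered pairs). -/
noncomputable def wiener {V : Type*} [Fintype V] (G : SimpleGraph V) : ℝ :=
  (1 / 2) * ∑ i : V, ∑ j : V, (G.dist i j : ℝ)

set_option linter.unusedSectionVars false
set_option linter.unusedVariables false
set_option maxHeartbeats 1000000

open SimpleGraph Walk

section Aux

variable {V : Type*} [Fintype V] {T G F : SimpleGraph V}

/-- In a tree, every path has length equal to the distance between its endpoints. -/
lemma tree_path_length (hT : T.IsTree) {i j : V} {p : T.Walk i j} (hp : p.IsPath) :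
    p.length = T.dist i j := by
  obtain ⟨q, hq, hql⟩ := hT.isConnected.exists_path_of_dist i j
  have := hT.IsAcyclic.path_unique ⟨p, hp⟩ ⟨q, hq⟩
  rw [Subtype.ext_iff] at this
  simp only at this
  rw [this, hql]

lemma tree_adj_dist (hT : T.IsTree) (i : V) {j u : V} (h : T.Adj j u) :
    T.dist i u + 1 = T.dist i j ∨ T.dist i j + 1 = T.dist i u := by
  have h1 : T.dist i j ≤ T.dist i u + 1 := by
    calc T.dist i j ≤ T.dist i u + T.dist u j := hT.isConnected.dist_triangle
    _ ≤ T.dist i u + 1 := by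
        have h1 : T.dist u j ≤ 1 := by simpa using T.dist_le (Walk.cons h.symm Walk.nil)
        omega
  have h2 : T.dist i u ≤ T.dist i j + 1 := by
    calc T.dist i u ≤ T.dist i j + T.dist j u := hT.isConnected.dist_triangle
    _ ≤ T.dist i j + 1 := by
        have h1 : T.dist j u ≤ 1 := by simpa using T.dist_le (Walk.cons h Walk.nil)
        omega
  have hne : T.dist i u ≠ T.dist i j := by
    intro heq
    obtain ⟨p, hp, hpl⟩ := hT.isConnected.exists_path_of_dist i u
    by_cases hjs : j ∈ p.support
    · have hsplit := congrArg Walk.length (p.take_spec hjs)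
      rw [Walk.length_append] at hsplit
      have hd1 : T.dist i j ≤ (p.takeUntil j hjs).length := T.dist_le _
      have hd2 : T.dist j u ≤ (p.dropUntil j hjs).length := T.dist_le _
      have hju : j ≠ u := h.ne
      have : (p.dropUntil j hjs).length = 0 := by omega
      have : j = u := by
        have hnil := Walk.eq_of_length_eq_zero this
        exact hnil ▸ rfl
      exact hju this
    · have hcp : (p.concat h.symm).IsPath := by
        rw [Walk.isPath_def, Walk.support_concat]
        exact List.Nodup.append ((Walk.isPath_def _).mp hp) (List.nodup_singleton j)
          (by simpa using fun hj => hjs hj)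
      have := tree_path_length hT hcp
      rw [Walk.length_concat, hpl] at this
      omega
  omega

/-- auxiliary: appending the parent edge to a shortest path gives a path -/
lemma concat_shortest_isPath (hT : T.IsTree) {i j u : V} (h : T.Adj u j)
    (hd : T.dist i u + 1 = T.dist i j) {p : T.Walk i u} (hp : p.IsPath)
    (hpl : p.length = T.dist i u) : (p.concat h).IsPath := by
  have hjs : j ∉ p.support := by
    intro hjs
    have hd1 : T.dist i j ≤ (p.takeUntil j hjs).length := T.dist_le _
    have hd2 := p.length_takeUntil_le hjs
    omega
  rw [Walk.isPath_def, Walk.support_concat]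
  exact List.Nodup.append ((Walk.isPath_def _).mp hp) (List.nodup_singleton j)
    (by simpa using fun hj => hjs hj)

lemma tree_parent (hT : T.IsTree) (i : V) {j : V} (hj : j ≠ i) :
    ∃! u : V, T.Adj j u ∧ T.dist i u + 1 = T.dist i j := by
  have hd0 : T.dist i j ≠ 0 := fun h0 => hj ((hT.isConnected.dist_eq_zero_iff).mp h0).symm
  obtain ⟨w, hwl⟩ := hT.isConnected.exists_walk_length_eq_dist i j
  -- decompose the reverse walk
  have hrl : w.reverse.length = T.dist i j := by rw [Walk.length_reverse]; exact hwl
  have hex : ∃ u : V, T.Adj j u ∧ T.dist i u + 1 = T.dist i j := by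
    cases hr : w.reverse with
    | nil => exact absurd (by rw [hr] at hrl; simpa using hrl.symm) hd0
    | cons hadj q =>
      rw [hr] at hrl
      rw [Walk.length_cons] at hrl
      rename_i u
      have hdu1 : T.dist i u ≤ q.length := by
        have := T.dist_le q.reverse
        rwa [Walk.length_reverse] at this
      have htri : T.dist i j ≤ T.dist i u + 1 := by
        calc T.dist i j ≤ T.dist i u + T.dist u j := hT.isConnected.dist_triangle
        _ ≤ T.dist i u + 1 := by
            have h1 : T.dist u j ≤ 1 := by simpa using T.dist_le (Walk.cons hadj.symm Walk.nil)
            omega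
      exact ⟨u, hadj, by omega⟩
  obtain ⟨u, hu⟩ := hex
  refine ⟨u, hu, fun y hy => ?_⟩
  -- uniqueness
  obtain ⟨p1, hp1, hl1⟩ := hT.isConnected.exists_path_of_dist i y
  obtain ⟨p2, hp2, hl2⟩ := hT.isConnected.exists_path_of_dist i u
  have hw1 : (p1.concat hy.1.symm).IsPath := concat_shortest_isPath hT hy.1.symm hy.2 hp1 hl1
  have hw2 : (p2.concat hu.1.symm).IsPath := concat_shortest_isPath hT hu.1.symm hu.2 hp2 hl2
  have heq := hT.IsAcyclic.path_unique ⟨p1.concat hy.1.symm, hw1⟩ ⟨p2.concat hu.1.symm, hw2⟩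
  rw [Subtype.ext_iff] at heq
  simp only at heq
  have hg := congrArg (fun (w : T.Walk i j) => w.getVert (T.dist i j - 1)) heq
  simp only [Walk.concat, Walk.getVert_append] at hg
  have hyl : ¬ (T.dist i j - 1 < p1.length) := by omega
  have hul : ¬ (T.dist i j - 1 < p2.length) := by omega
  rw [if_neg hyl, if_neg hul] at hg
  have h1 : T.dist i j - 1 - p1.length = 0 := by omega
  have h2 : T.dist i j - 1 - p2.length = 0 := by omega
  rw [h1, h2] at hg
  simpa using hg

lemma sum_deg_dist (hT : T.IsTree) (i : V) :
    ∑ j : V, (T.degree j : ℝ) * (T.dist i j : ℝ)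
      = 2 * (∑ j : V, (T.dist i j : ℝ)) - ((Fintype.card V : ℝ) - 1) := by
  classical
  have hdeg : ∀ j : V, (T.degree j : ℝ) * (T.dist i j : ℝ)
      = ∑ u : V, if T.Adj j u then (T.dist i j : ℝ) else 0 := by
    intro j
    rw [← Finset.sum_filter, Finset.sum_const, ← neighborFinset_eq_filter,
      ← SimpleGraph.degree, nsmul_eq_mul]
  have hsplit : ∀ j u : V, (if T.Adj j u then (T.dist i j : ℝ) else 0)
      = (if T.Adj j u ∧ T.dist i u + 1 = T.dist i j then (T.dist i j : ℝ) else 0)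
      + (if T.Adj j u ∧ T.dist i j + 1 = T.dist i u then (T.dist i j : ℝ) else 0) := by
    intro j u
    by_cases h : T.Adj j u
    · by_cases hc : T.dist i u + 1 = T.dist i j
      · have hc2 : ¬ (T.dist i j + 1 = T.dist i u) := by omega
        simp [h, hc, hc2]
      · have hc2 : T.dist i j + 1 = T.dist i u := by
          rcases tree_adj_dist hT i h with h' | h'
          · exact absurd h' hc
          · exact h'
        simp [h, hc, hc2]
    · simp [h]
  have hpart1 : ∀ j : V,
      (∑ u : V, if T.Adj j u ∧ T.dist i u + 1 = T.dist i j then (T.dist i j : ℝ) else 0)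
      = (T.dist i j : ℝ) := by
    intro j
    by_cases hj : j = i
    · subst hj; simp [SimpleGraph.dist_self]
    · obtain ⟨u0, hu0, huniq⟩ := tree_parent hT i hj
      rw [Finset.sum_eq_single u0]
      · rw [if_pos hu0]
      · intro b _ hb; exact if_neg (fun hc => hb (huniq b hc))
      · intro habs; exact absurd (Finset.mem_univ u0) habs
  have hval : ∀ j u : V, (if T.Adj j u ∧ T.dist i j + 1 = T.dist i u then (T.dist i j : ℝ) else 0)
      = (if T.Adj j u ∧ T.dist i j + 1 = T.dist i u then (T.dist i u : ℝ) - 1 else 0) := by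
    intro j u
    split_ifs with h
    · have h2 := h.2
      rw [← h2]; push_cast; ring
    · rfl
  have hpart2 : ∀ u : V,
      (∑ j : V, if T.Adj j u ∧ T.dist i j + 1 = T.dist i u then (T.dist i u : ℝ) - 1 else 0)
      = if u = i then 0 else (T.dist i u : ℝ) - 1 := by
    intro u
    by_cases hu : u = i
    · subst hu; simp [SimpleGraph.dist_self]
    · obtain ⟨j0, hj0, huniq⟩ := tree_parent hT i hu
      rw [if_neg hu, Finset.sum_eq_single j0]
      · rw [if_pos ⟨hj0.1.symm, hj0.2⟩]
      · intro b _ hb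
        exact if_neg (fun hc => hb (huniq b ⟨hc.1.symm, hc.2⟩))
      · intro habs; exact absurd (Finset.mem_univ j0) habs
  calc ∑ j : V, (T.degree j : ℝ) * (T.dist i j : ℝ)
      = ∑ j : V, ∑ u : V, ((if T.Adj j u ∧ T.dist i u + 1 = T.dist i j then (T.dist i j:ℝ) else 0)
        + (if T.Adj j u ∧ T.dist i j + 1 = T.dist i u then (T.dist i j : ℝ) else 0)) := by
        refine Finset.sum_congr rfl fun j _ => ?_
        rw [hdeg j]
        exact Finset.sum_congr rfl fun u _ => hsplit j u
    _ = (∑ j : V, (T.dist i j : ℝ))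
        + ∑ j : V, ∑ u : V, (if T.Adj j u ∧ T.dist i j + 1 = T.dist i u then (T.dist i u:ℝ) - 1 else 0) := by
        rw [Finset.sum_congr rfl fun j _ => Finset.sum_add_distrib, Finset.sum_add_distrib]
        congr 1
        · exact Finset.sum_congr rfl fun j _ => hpart1 j
        · exact Finset.sum_congr rfl fun j _ => Finset.sum_congr rfl fun u _ => hval j u
    _ = (∑ j : V, (T.dist i j : ℝ))
        + ∑ u : V, (if u = i then 0 else (T.dist i u : ℝ) - 1) := by
        rw [Finset.sum_comm]
        exact congrArg _ (Finset.sum_congr rfl fun u _ => hpart2 u)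
    _ = 2 * (∑ j : V, (T.dist i j : ℝ)) - ((Fintype.card V : ℝ) - 1) := by
        have h1 : ∀ u : V, (if u = i then 0 else (T.dist i u : ℝ) - 1)
            = ((T.dist i u : ℝ) - 1) - (if u = i then (T.dist i u : ℝ) - 1 else 0) := by
          intro u; split_ifs with h <;> simp [h]
        rw [Finset.sum_congr rfl fun u _ => h1 u, Finset.sum_sub_distrib,
          Finset.sum_ite_eq' univ i (fun u => (T.dist i u : ℝ) - 1), Finset.sum_sub_distrib]
        simp [Finset.card_univ, SimpleGraph.dist_self]
        ring

lemma acyclic_mono (hle : F ≤ G) (hG : G.IsAcyclic) : F.IsAcyclic :=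
  fun _ c hc => hG (c.mapLe hle) (hc.mapLe hle)

lemma cc_card_of_connected (h : G.Connected) : Nat.card G.ConnectedComponent = 1 := by
  have : Subsingleton G.ConnectedComponent := by
    constructor
    intro a b
    induction a using SimpleGraph.ConnectedComponent.ind with
    | _ va =>
    induction b using SimpleGraph.ConnectedComponent.ind with
    | _ vb =>
    exact ConnectedComponent.eq.mpr (h.preconnected va vb)
  have : Nonempty G.ConnectedComponent := ⟨G.connectedComponentMk (Classical.choice h.nonempty)⟩
  rw [Nat.card_eq_one_iff_unique]
  exact ⟨‹_›, ‹_›⟩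

lemma cc_card_le_of_le (hle : F ≤ G) :
    Nat.card G.ConnectedComponent ≤ Nat.card F.ConnectedComponent := by
  apply Nat.card_le_card_of_surjective
    (SimpleGraph.ConnectedComponent.map (SimpleGraph.Hom.ofLE hle))
  intro c
  induction c using SimpleGraph.ConnectedComponent.ind with
  | _ v => exact ⟨F.connectedComponentMk v, rfl⟩

lemma reach_delete_cases {u v : V} (h : G.Adj u v) {x w : V} (p : G.Walk x w) :
    (G.deleteEdges {s(u,v)}).Reachable x w
    ∨ ((G.deleteEdges {s(u,v)}).Reachable x u ∧ (G.deleteEdges {s(u,v)}).Reachable v w)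
    ∨ ((G.deleteEdges {s(u,v)}).Reachable x v ∧ (G.deleteEdges {s(u,v)}).Reachable u w) := by
  set G' := G.deleteEdges {s(u,v)} with hG'
  induction p with
  | nil => exact Or.inl (Reachable.refl _)
  | cons hadj q ih =>
    rename_i a b c
    by_cases he : s(a, b) = s(u, v)
    · rw [Sym2.eq_iff] at he
      rcases he with ⟨hau, hbv⟩ | ⟨hav, hbu⟩
      · subst hau; subst hbv
        rcases ih with h1 | ⟨h1, h2⟩ | ⟨h1, h2⟩
        · exact Or.inr (Or.inl ⟨Reachable.refl _, h1⟩)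
        · exact Or.inr (Or.inl ⟨Reachable.refl _, h2⟩)
        · exact Or.inl h2
      · subst hav; subst hbu
        rcases ih with h1 | ⟨h1, h2⟩ | ⟨h1, h2⟩
        · exact Or.inr (Or.inr ⟨Reachable.refl _, h1⟩)
        · exact Or.inl h2
        · exact Or.inr (Or.inr ⟨Reachable.refl _, h2⟩)
    · have hadj' : G'.Adj a b := by
        rw [hG', SimpleGraph.deleteEdges_adj]
        exact ⟨hadj, by simpa using he⟩
      rcases ih with h1 | ⟨h1, h2⟩ | ⟨h1, h2⟩
      · exact Or.inl (hadj'.reachable.trans h1)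
      · exact Or.inr (Or.inl ⟨hadj'.reachable.trans h1, h2⟩)
      · exact Or.inr (Or.inr ⟨hadj'.reachable.trans h1, h2⟩)

lemma card_cc_delete {u v : V} (h : G.Adj u v)
    (hb : ¬ (G.deleteEdges {s(u,v)}).Reachable u v) :
    Nat.card (G.deleteEdges {s(u,v)}).ConnectedComponent
      = Nat.card G.ConnectedComponent + 1 := by
  set G' := G.deleteEdges {s(u,v)} with hG'
  have hle : G' ≤ G := SimpleGraph.deleteEdges_le _
  let f : G'.ConnectedComponent → G.ConnectedComponent :=
    ConnectedComponent.map (SimpleGraph.Hom.ofLE hle)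
  have fmk : ∀ x : V, f (G'.connectedComponentMk x) = G.connectedComponentMk x := fun x => rfl
  have houtG : ∀ c : G.ConnectedComponent, G.connectedComponentMk (Quot.out c) = c :=
    fun c => Quot.out_eq c
  have houtG' : ∀ c : G'.ConnectedComponent, G'.connectedComponentMk (Quot.out c) = c :=
    fun c => Quot.out_eq c
  have hucases : ∀ x : V, G.Reachable u x → G'.Reachable u x ∨ G'.Reachable v x := by
    intro x hr
    obtain ⟨p⟩ := hr
    rcases reach_delete_cases h p with h1 | ⟨h1, h2⟩ | ⟨h1, h2⟩
    · exact Or.inl h1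
    · exact Or.inr h2
    · exact absurd h1 hb
  have hunaff : ∀ x y : V, G.Reachable x y → ¬ G.Reachable x u → G'.Reachable x y := by
    intro x y hr hnxu
    obtain ⟨p⟩ := hr
    rcases reach_delete_cases h p with h1 | ⟨h1, h2⟩ | ⟨h1, h2⟩
    · exact h1
    · exact absurd (h1.mono hle) hnxu
    · exact absurd ((h1.mono hle).trans h.reachable.symm) hnxu
  have keyequiv : G'.ConnectedComponent ≃ (G.ConnectedComponent ⊕ PUnit.{1}) := by
    refine
      { toFun := fun c => if c = G'.connectedComponentMk v then Sum.inr ⟨⟩ else Sum.inl (f c),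
        invFun := fun s => match s with
          | Sum.inr _ => G'.connectedComponentMk v
          | Sum.inl c => if c = G.connectedComponentMk u then G'.connectedComponentMk u
              else G'.connectedComponentMk (Quot.out c),
        left_inv := ?_, right_inv := ?_ }
    · intro c'
      by_cases hcv : c' = G'.connectedComponentMk v
      · simp [hcv]
      · dsimp only
        rw [if_neg hcv]
        rw [← houtG' c'] at hcv ⊢
        set x := Quot.out c' with hx
        rw [fmk x]
        dsimp only
        by_cases hcu : G.connectedComponentMk x = G.connectedComponentMk u
        · rw [if_pos hcu]
          have hrux : G.Reachable u x := (ConnectedComponent.eq.mp hcu).symm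
          rcases hucases x hrux with h1 | h1
          · exact ConnectedComponent.eq.mpr h1
          · exact absurd (ConnectedComponent.eq.mpr h1).symm hcv
        · rw [if_neg hcu]
          set y := Quot.out (G.connectedComponentMk x) with hy
          have hxy : G.Reachable x y := by
            rw [← ConnectedComponent.eq, houtG]
          have hnxu : ¬ G.Reachable x u := fun hr => hcu (ConnectedComponent.eq.mpr hr)
          exact ConnectedComponent.eq.mpr (hunaff x y hxy hnxu).symm
    · intro s
      match s with
      | Sum.inr _ => simp
      | Sum.inl c =>
        dsimp only
        by_cases hcu : c = G.connectedComponentMk u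
        · rw [if_pos hcu]
          have hne : G'.connectedComponentMk u ≠ G'.connectedComponentMk v :=
            fun hr => hb (ConnectedComponent.eq.mp hr)
          rw [if_neg hne, fmk, ← hcu]
        · rw [if_neg hcu]
          set y := Quot.out c with hy
          have hcy : G.connectedComponentMk y = c := houtG c
          have hne : G'.connectedComponentMk y ≠ G'.connectedComponentMk v := by
            intro hr
            have h1 : G.Reachable y v := (ConnectedComponent.eq.mp hr).mono hle
            have h2 : G.Reachable y u := h1.trans h.reachable.symm
            exact hcu (hcy ▸ (ConnectedComponent.eq.mpr h2) ▸ rfl)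
          rw [if_neg hne, fmk, hcy]
  rw [Nat.card_congr keyequiv, Nat.card_sum]
  simp

lemma card_cc_delete_edge (hG : G.IsAcyclic) {e : Sym2 V} (he : e ∈ G.edgeSet) :
    Nat.card (G.deleteEdges {e}).ConnectedComponent = Nat.card G.ConnectedComponent + 1 := by
  induction e with
  | _ u v =>
    have hadj : G.Adj u v := G.mem_edgeSet.mp he
    have hbr := (isAcyclic_iff_forall_adj_isBridge.mp hG) hadj
    rw [isBridge_iff] at hbr
    exact card_cc_delete hadj hbr

lemma eq_of_le_of_cc (hle : F ≤ G) (hG : G.IsAcyclic)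
    (hc : Nat.card F.ConnectedComponent ≤ Nat.card G.ConnectedComponent) : F = G := by
  by_contra hne
  have hss : F.edgeSet ⊂ G.edgeSet :=
    ⟨SimpleGraph.edgeSet_mono hle, fun habs => hne (SimpleGraph.edgeSet_inj.mp
      (Set.Subset.antisymm (SimpleGraph.edgeSet_mono hle) habs))⟩
  obtain ⟨e, heG, heF⟩ := Set.exists_of_ssubset hss
  have hle2 : F ≤ G.deleteEdges {e} := by
    intro x y hxy
    rw [SimpleGraph.deleteEdges_adj]
    refine ⟨hle hxy, ?_⟩
    intro hmem
    rw [Set.mem_singleton_iff] at hmem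
    exact heF (hmem ▸ (F.mem_edgeSet.mpr hxy))
  have h1 := card_cc_delete_edge hG heG
  have h2 := cc_card_le_of_le hle2
  omega

lemma numSpanningTrees_tree (hT : T.IsTree) : numSpanningTrees T = 1 := by
  rw [numSpanningTrees, Nat.card_eq_one_iff_unique]
  have key : ∀ (S : SimpleGraph V), S ≤ T → S.IsTree → S = T := by
    intro S hSle hS
    have h1 : S.edgeFinset ⊆ T.edgeFinset := SimpleGraph.edgeFinset_mono hSle
    have h2 := hS.card_edgeFinset
    have h3 := hT.card_edgeFinset
    have := Finset.eq_of_subset_of_card_le h1 (by omega)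
    exact SimpleGraph.edgeFinset_inj.mp this
  refine ⟨⟨?_⟩, ⟨⟨T, le_refl T, hT⟩⟩⟩
  rintro ⟨F, hle, hF⟩ ⟨F', hle', hF'⟩
  simp [Subtype.ext_iff, key F hle hF, key F' hle' hF']

lemma numSepForests_eq_dist (hT : T.IsTree) {i j : V} (hij : i ≠ j) :
    numSepForests T i j = T.dist i j := by
  obtain ⟨p, hp, hpl⟩ := hT.isConnected.exists_path_of_dist i j
  have hcc1 : Nat.card T.ConnectedComponent = 1 := cc_card_of_connected hT.isConnected
  have hmem : ∀ e ∈ p.edges, e ∈ T.edgeSet := fun e he => p.edges_subset_edgeSet he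
  -- the path p is contained (edge-wise) in every T-walk from i to j
  have hpath_sub : ∀ (w : T.Walk i j), ∀ e ∈ p.edges, e ∈ w.edges := by
    intro w e he
    have hbp : w.bypass.IsPath := Walk.bypass_isPath w
    have heq := hT.IsAcyclic.path_unique ⟨w.bypass, hbp⟩ ⟨p, hp⟩
    rw [Subtype.ext_iff] at heq
    simp only at heq
    exact Walk.edges_bypass_subset w (heq ▸ he)
  have hsep : ∀ e ∈ p.edges, ¬ (T.deleteEdges {e}).Reachable i j := by
    intro e he hr
    obtain ⟨w⟩ := hr
    have he' : e ∈ w.edges := by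
      have hh := hpath_sub (w.mapLe (T.deleteEdges_le {e})) e he
      simpa [Walk.mapLe, Walk.edges_map, SimpleGraph.Hom.ofLE_apply,
        Sym2.map_id'] using hh
    have := w.edges_subset_edgeSet he'
    rw [SimpleGraph.edgeSet_deleteEdges] at this
    exact this.2 rfl
  have hwd : ∀ e ∈ p.edges, (T.deleteEdges {e}) ≤ T ∧ (T.deleteEdges {e}).IsAcyclic ∧
      Nat.card (T.deleteEdges {e}).ConnectedComponent = 2 ∧
      ¬ (T.deleteEdges {e}).Reachable i j := by
    intro e he
    refine ⟨T.deleteEdges_le {e}, acyclic_mono (T.deleteEdges_le {e}) hT.IsAcyclic, ?_, hsep e he⟩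
    rw [card_cc_delete_edge hT.IsAcyclic (hmem e he), hcc1]
  let φ : {e : Sym2 V // e ∈ p.edges} → {F : SimpleGraph V // F ≤ T ∧ F.IsAcyclic ∧
      Nat.card F.ConnectedComponent = 2 ∧ ¬ F.Reachable i j} :=
    fun e => ⟨T.deleteEdges {e.1}, hwd e.1 e.2⟩
  have hbij : Function.Bijective φ := by
    constructor
    · rintro ⟨e1, he1⟩ ⟨e2, he2⟩ heq
      rw [Subtype.ext_iff] at heq ⊢
      simp only [φ] at heq
      by_contra hne
      have h1 : e2 ∈ (T.deleteEdges {e1}).edgeSet := by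
        rw [SimpleGraph.edgeSet_deleteEdges]
        exact ⟨hmem e2 he2, by simpa using fun h => hne h.symm⟩
      rw [heq, SimpleGraph.edgeSet_deleteEdges] at h1
      exact h1.2 rfl
    · rintro ⟨F, hle, hac, hcc, hreach⟩
      have hex : ∃ e ∈ p.edges, e ∉ F.edgeSet := by
        by_contra hall
        push_neg at hall
        exact hreach ⟨p.transfer F hall⟩
      obtain ⟨e, he, heF⟩ := hex
      have hle2 : F ≤ T.deleteEdges {e} := by
        intro x y hxy
        rw [SimpleGraph.deleteEdges_adj]
        refine ⟨hle hxy, ?_⟩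
        intro hm
        rw [Set.mem_singleton_iff] at hm
        exact heF (hm ▸ F.mem_edgeSet.mpr hxy)
      have hFeq : F = T.deleteEdges {e} := by
        apply eq_of_le_of_cc hle2 (acyclic_mono (T.deleteEdges_le {e}) hT.IsAcyclic)
        rw [hcc, (hwd e he).2.2.1]
      exact ⟨⟨e, he⟩, Subtype.ext hFeq.symm⟩
  have hcard := Nat.card_congr (Equiv.ofBijective φ hbij)
  rw [numSepForests, ← hcard]
  have hnodup : p.edges.Nodup := hp.isTrail.edges_nodup
  rw [Nat.card_congr (hnodup.getEquiv p.edges).symm]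
  simp only [Nat.card_eq_fintype_card, Fintype.card_fin]
  rw [Walk.length_edges, hpl]

lemma effRes_eq_dist (hT : T.IsTree) (i j : V) : effRes T i j = (T.dist i j : ℝ) := by
  rw [effRes, numSpanningTrees_tree hT]
  by_cases hij : i = j
  · subst hij
    have h0 : numSepForests T i i = 0 := by
      rw [numSepForests]
      have : IsEmpty {F : SimpleGraph V // F ≤ T ∧ F.IsAcyclic ∧
          Nat.card F.ConnectedComponent = 2 ∧ ¬ F.Reachable i i} :=
        ⟨fun F => F.2.2.2.2 (Reachable.refl i)⟩
      exact @Nat.card_of_isEmpty _ this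
    rw [h0]
    simp [SimpleGraph.dist_self]
  · rw [numSepForests_eq_dist hT hij]
    simp

end Aux

/-- For a tree `T` on `n ≥ 2` vertices, Kemeny's constant equals
`2W(T)/(n−1) − n + 1/2` where `W` is the Wiener index. -/
theorem kemeny_tree_eq_wiener {V : Type*} [Fintype V] (T : SimpleGraph V)
    (hT : T.IsTree) (hn : 2 ≤ Fintype.card V) :
    kemeny T = 2 * wiener T / ((Fintype.card V : ℝ) - 1) - (Fintype.card V : ℝ) + 1 / 2 := by
  set n : ℝ := (Fintype.card V : ℝ) with hn'
  have hn2 : (2 : ℝ) ≤ n := by rw [hn']; exact_mod_cast hn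
  have hne : n - 1 ≠ 0 := by intro h; nlinarith
  have hm : (T.edgeFinset.card : ℝ) = n - 1 := by
    have := hT.card_edgeFinset
    rw [hn']
    push_cast [← this]
    ring
  have hdegsum : ∑ i : V, (T.degree i : ℝ) = 2 * (n - 1) := by
    rw [← hm]
    exact_mod_cast T.sum_degrees_eq_twice_card_edges
  set f : V → ℝ := fun i => ∑ j : V, (T.dist i j : ℝ) with hf
  have hinner : ∀ i : V, ∑ j : V, (T.degree i : ℝ) * effRes T i j * (T.degree j : ℝ)
      = (T.degree i : ℝ) * (2 * f i - (n - 1)) := by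
    intro i
    have h1 : ∀ j : V, (T.degree i : ℝ) * effRes T i j * (T.degree j : ℝ)
        = (T.degree i : ℝ) * ((T.degree j : ℝ) * (T.dist i j : ℝ)) := by
      intro j
      rw [effRes_eq_dist hT]
      ring
    rw [Finset.sum_congr rfl fun j _ => h1 j, ← Finset.mul_sum, sum_deg_dist hT i]
  have houter : ∑ i : V, ∑ j : V, (T.degree i : ℝ) * effRes T i j * (T.degree j : ℝ)
      = 2 * (∑ i : V, (T.degree i : ℝ) * f i) - (n - 1) * (2 * (n - 1)) := by
    rw [Finset.sum_congr rfl fun i _ => hinner i]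
    rw [Finset.sum_congr rfl fun i _ => (by ring :
      (T.degree i : ℝ) * (2 * f i - (n - 1))
        = 2 * ((T.degree i : ℝ) * f i) - (n - 1) * (T.degree i : ℝ))]
    rw [Finset.sum_sub_distrib, ← Finset.mul_sum, ← Finset.mul_sum, hdegsum]
  have hdf : ∑ i : V, (T.degree i : ℝ) * f i = 2 * (∑ i : V, f i) - n * (n - 1) := by
    have h1 : ∀ i : V, (T.degree i : ℝ) * f i = ∑ j : V, (T.degree i : ℝ) * (T.dist i j : ℝ) := by
      intro i; rw [hf, Finset.mul_sum]
    rw [Finset.sum_congr rfl fun i _ => h1 i, Finset.sum_comm]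
    have h2 : ∀ j : V, ∑ i : V, (T.degree i : ℝ) * (T.dist i j : ℝ)
        = 2 * f j - (n - 1) := by
      intro j
      have h3 : ∀ i : V, (T.degree i : ℝ) * (T.dist i j : ℝ)
          = (T.degree i : ℝ) * (T.dist j i : ℝ) := by
        intro i; rw [SimpleGraph.dist_comm]
      rw [Finset.sum_congr rfl fun i _ => h3 i, sum_deg_dist hT j]
    rw [Finset.sum_congr rfl fun j _ => h2 j, Finset.sum_sub_distrib, ← Finset.mul_sum]
    simp [Finset.card_univ]
    rw [← hn']; ring
  have hWf : ∑ i : V, f i = 2 * wiener T := by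
    rw [wiener, hf]; ring
  rw [kemeny, houter, hdf, hWf, hm]
  field_simp
  ring
end
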